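/- arXiv:2407.17612 — 4 statements merged into one kernel-verified Lean document; each statement's English description precedes it below -/
import Mathlib

section
/- Let (X, τ, I) be an ideal topological space with I a maximal ideal. Then every subset A of X is either closed or open in the *-topology τ*. -/
open Set

def IsIdeal {X : Type*} (I : Set (Set X)) : Prop :=
  I.Nonempty ∧ (∀ A B : Set X, A ∈ I → B ⊆ A → B ∈ I) ∧
    (∀ A B : Set X, A ∈ I → B ∈ I → A ∪ B ∈ I)

def IsMaximalIdeal {X : Type*} (I : Set (Set X)) : Prop :=
  IsIdeal I ∧ I ≠ Set.univ ∧
    ∀ J : Set (Set X), IsIdeal J → I ⊆ J → J = I ∨ J = Set.univ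

def IsMinimalIdeal {X : Type*} (I : Set (Set X)) : Prop :=
  IsIdeal I ∧ I ≠ {∅} ∧ I ≠ Set.univ ∧
    ∀ J : Set (Set X), IsIdeal J → J ⊆ I → J = I ∨ J = {∅}

def Ann {X : Type*} (J : Set (Set X)) : Set (Set X) :=
  {A | ∀ B ∈ J, A ∩ B = ∅}

def idealQuot {X : Type*} (I J : Set (Set X)) : Set (Set X) :=
  {A | ∀ B ∈ J, A ∩ B ∈ I}

def localFn {X : Type*} [TopologicalSpace X] (I : Set (Set X)) (A : Set X) : Set X :=
  {x | ∀ U : Set X, IsOpen U → x ∈ U → U ∩ A ∉ I}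

def sharpFn {X : Type*} [TopologicalSpace X] (I : Set (Set X)) (A : Set X) : Set X :=
  {x | ∀ U : Set X, IsOpen U → x ∈ U → ∃ J ∈ I, J.Nonempty ∧ J ⊆ U ∩ A}

def starTop {X : Type*} (τ : TopologicalSpace X) (I : Set (Set X)) : TopologicalSpace X :=
  TopologicalSpace.generateFrom {A | @localFn X τ I Aᶜ ⊆ Aᶜ}

def sharpTop {X : Type*} (τ : TopologicalSpace X) (I : Set (Set X)) : TopologicalSpace X :=
  TopologicalSpace.generateFrom {A | @localFn X τ (Ann I) Aᶜ ⊆ Aᶜ}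


lemma maximal_dichotomy {X : Type*} {I : Set (Set X)} (hI : IsMaximalIdeal I)
    (A : Set X) : A ∈ I ∨ Aᶜ ∈ I := by
  by_cases hA : A ∈ I
  · exact Or.inl hA
  · right
    obtain ⟨⟨⟨C0, hC0⟩, hdown, hunion⟩, hproper, hmax⟩ := hI
    set J : Set (Set X) := {B | ∃ C ∈ I, B ⊆ C ∪ A} with hJ
    have hJideal : IsIdeal J := by
      refine ⟨⟨C0, C0, hC0, subset_union_left⟩, ?_, ?_⟩
      · rintro B B' ⟨C, hC, hBC⟩ hB'B
        exact ⟨C, hC, hB'B.trans hBC⟩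
      · rintro B B' ⟨C, hC, hBC⟩ ⟨C', hC', hB'C⟩
        exact ⟨C ∪ C', hunion _ _ hC hC', by
          intro x hx
          rcases hx with hx | hx
          · rcases hBC hx with h | h
            · exact Or.inl (Or.inl h)
            · exact Or.inr h
          · rcases hB'C hx with h | h
            · exact Or.inl (Or.inr h)
            · exact Or.inr h⟩
    have hIJ : I ⊆ J := fun C hC => ⟨C, hC, subset_union_left⟩
    rcases hmax J hJideal hIJ with h | h
    · exfalso
      apply hA
      rw [← h]
      exact ⟨C0, hC0, subset_union_right⟩
    · have : (univ : Set X) ∈ J := h ▸ mem_univ _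
      obtain ⟨C, hC, hsub⟩ := this
      apply hdown C Aᶜ hC
      intro x hx
      rcases hsub (mem_univ x) with h' | h'
      · exact h'
      · exact absurd h' hx

lemma localFn_empty {X : Type*} [TopologicalSpace X] {I : Set (Set X)}
    (hI : IsIdeal I) {A : Set X} (hA : A ∈ I) : localFn I A = ∅ := by
  ext x
  simp only [localFn, mem_setOf_eq, mem_empty_iff_false, iff_false, not_forall]
  exact ⟨univ, isOpen_univ, mem_univ x, by simpa using hI.2.1 A (univ ∩ A) hA (by simp)⟩

theorem stmt3 {X : Type*} (τ : TopologicalSpace X) (I : Set (Set X))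
    (hI : IsMaximalIdeal I) (A : Set X) :
    @IsClosed X (starTop τ I) A ∨ @IsOpen X (starTop τ I) A := by
  rcases maximal_dichotomy hI A with hA | hA
  · left
    have hop : @IsOpen X (starTop τ I) Aᶜ := by
      apply TopologicalSpace.GenerateOpen.basic
      show @localFn X τ I Aᶜᶜ ⊆ Aᶜᶜ
      rw [compl_compl, localFn_empty hI.1 hA]
      exact empty_subset _
    exact @IsClosed.mk X (starTop τ I) A hop
  · right
    apply TopologicalSpace.GenerateOpen.basic
    show @localFn X τ I Aᶜ ⊆ Aᶜ
    rw [localFn_empty hI.1 hA]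
    exact empty_subset _
end

section
/- Let (X, τ, I) be an ideal topological space with I a maximal ideal. Then the topological space (X, τ*) is T0. -/
open Set

theorem stmt4 {X : Type*} (τ : TopologicalSpace X) (I : Set (Set X))
    (hI : IsMaximalIdeal I) :
    @T0Space X (starTop τ I) := by
  have hempty : (∅ : Set X) ∈ I := by
    obtain ⟨A, hA⟩ := hI.1.1
    exact hI.1.2.1 A ∅ hA (empty_subset A)
  have key : ∀ a b : X, a ≠ b → ({a} : Set X) ∉ I → ({b} : Set X) ∈ I := by
    intro a b hab ha
    set J : Set (Set X) := {A | A \ {a} ∈ I} with hJ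
    have hJideal : IsIdeal J := by
      refine ⟨⟨∅, by simpa [hJ] using hempty⟩,
        fun A B hA hBA => hI.1.2.1 _ _ hA (diff_subset_diff_left hBA),
        fun A B hA hB => ?_⟩
      have h2 : (A ∪ B) \ {a} = A \ {a} ∪ B \ {a} := union_diff_distrib
      show (A ∪ B) \ {a} ∈ I
      rw [h2]
      exact hI.1.2.2 _ _ hA hB
    have hIJ : I ⊆ J := fun A hA => hI.1.2.1 A _ hA diff_subset
    rcases hI.2.2 J hJideal hIJ with h | h
    · exfalso
      apply ha
      have hmem : ({a} : Set X) ∈ J := by simpa [hJ] using hempty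
      rwa [h] at hmem
    · have hmem : ({b} : Set X) ∈ J := by rw [h]; trivial
      have hd : ({b} : Set X) \ {a} = {b} :=
        Set.diff_singleton_eq_self (by simpa using hab)
      rw [hJ] at hmem
      simp only [Set.mem_setOf_eq, hd] at hmem
      exact hmem
  have hopen : ∀ a : X, ({a} : Set X) ∈ I → @IsOpen X (starTop τ I) ({a}ᶜ) := by
    intro a haI
    apply TopologicalSpace.GenerateOpen.basic
    show @localFn X τ I (({a}ᶜ)ᶜ) ⊆ ({a}ᶜ)ᶜ
    rw [compl_compl]
    intro z hz
    exfalso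
    apply hz univ isOpen_univ (mem_univ z)
    exact hI.1.2.1 _ _ haI (inter_subset_right)
  letI := starTop τ I
  refine ⟨fun x y hxy => ?_⟩
  by_contra hne
  have hsep := (inseparable_iff_forall_isOpen).1 hxy
  rcases Classical.em (({x} : Set X) ∈ I) with hx | hx
  · have := (hsep _ (hopen x hx)).2 (by simpa using Ne.symm hne)
    simp at this
  · have hy := key x y hne hx
    have := (hsep _ (hopen y hy)).1 (by simpa using hne)
    simp at this
end

section
/- Let (X, τ, I) be an ideal topological space and A ⊆ X. Then A^♯(I,τ) ∪ A*(I,τ) = cl(A), the closure of A in (X, τ). -/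
open Set

theorem stmt18 {X : Type*} [TopologicalSpace X] (I : Set (Set X)) (hI : IsIdeal I)
    (A : Set X) :
    sharpFn I A ∪ localFn I A = closure A := by
  obtain ⟨⟨S, hS⟩, hdown, -⟩ := hI
  have hempty : ∅ ∈ I := hdown S ∅ hS (empty_subset S)
  ext x
  simp only [mem_union, mem_closure_iff]
  constructor
  · rintro (hx | hx) U hU hxU
    · obtain ⟨J, -, hJne, hJsub⟩ := hx U hU hxU
      exact hJne.mono hJsub
    · have := hx U hU hxU
      rcases eq_empty_or_nonempty (U ∩ A) with h | h
      · exact absurd (h ▸ hempty) this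
      · exact h
  · intro hx
    by_cases hloc : x ∈ localFn I A
    · exact Or.inr hloc
    · left
      simp only [localFn, mem_setOf_eq, not_forall, not_not] at hloc
      obtain ⟨U, hU, hxU, hUA⟩ := hloc
      intro V hV hxV
      refine ⟨(V ∩ U) ∩ A, hdown _ _ hUA ?_, hx _ (hV.inter hU) ⟨hxV, hxU⟩, ?_⟩
      · rintro y ⟨⟨_, hyU⟩, hyA⟩; exact ⟨hyU, hyA⟩
      · rintro y ⟨⟨hyV, _⟩, hyA⟩; exact ⟨hyV, hyA⟩
end

section
/- Let (X, τ) be a topological space and let F be a nonempty proper closed subset of X (F ≠ ∅, F ≠ X). Then the complement X \ F is both open and closed in the sharp topology τ^♯ associated to the principal ideal I(F); in particular, (X, τ^♯) is disconnected. -/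
open Set

theorem stmt19 {X : Type*} [τ : TopologicalSpace X] (F : Set X)
    (hF : IsClosed F) (hne : F ≠ ∅) (hprop : F ≠ Set.univ) :
    @IsOpen X (sharpTop τ {B : Set X | B ⊆ F}) Fᶜ ∧
      @IsClosed X (sharpTop τ {B : Set X | B ⊆ F}) Fᶜ ∧
      ¬ @ConnectedSpace X (sharpTop τ {B : Set X | B ⊆ F}) := by
  have hopen : @IsOpen X (sharpTop τ {B : Set X | B ⊆ F}) Fᶜ := by
    apply TopologicalSpace.isOpen_generateFrom_of_mem
    simp only [Set.mem_setOf_eq, compl_compl]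
    intro x hx
    by_contra hxF
    have h := hx Fᶜ hF.isOpen_compl hxF
    apply h
    intro B hB
    have hBF : B ⊆ F := hB
    ext y
    simp only [Set.mem_inter_iff, Set.mem_compl_iff, Set.mem_empty_iff_false, iff_false]
    rintro ⟨⟨hy1, hy2⟩, hy3⟩
    exact hy1 (hBF hy3)
  have hFopen : @IsOpen X (sharpTop τ {B : Set X | B ⊆ F}) F := by
    apply TopologicalSpace.isOpen_generateFrom_of_mem
    simp only [Set.mem_setOf_eq]
    intro x hx
    exfalso
    apply hx Set.univ isOpen_univ (Set.mem_univ x)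
    intro B hB
    have hBF : B ⊆ F := hB
    ext y
    simp only [Set.mem_inter_iff, Set.mem_compl_iff, Set.mem_univ, true_and,
      Set.mem_empty_iff_false, iff_false]
    rintro ⟨hy1, hy2⟩
    exact hy1 (hBF hy2)
  have hclosed : @IsClosed X (sharpTop τ {B : Set X | B ⊆ F}) Fᶜ :=
    (@isClosed_compl_iff X (sharpTop τ {B : Set X | B ⊆ F}) F).mpr hFopen
  refine ⟨hopen, hclosed, ?_⟩
  intro hconn
  have hclopen : @IsClopen X (sharpTop τ {B : Set X | B ⊆ F}) Fᶜ := ⟨hclosed, hopen⟩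
  rcases (@isClopen_iff X (sharpTop τ {B : Set X | B ⊆ F})
      hconn.toPreconnectedSpace Fᶜ).mp hclopen with h | h
  · exact hprop (by simpa [Set.compl_empty_iff] using h)
  · exact hne (by simpa [Set.compl_univ_iff] using h)
end
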